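/- For any countable ordinal α, the union of a strongly functionally discrete family of sets each of the α'th functionally additive class in a topological space X is again of the α'th functionally additive class; the same holds for the functionally multiplicative classes. -/

import Mathlib

open Set Topology Ordinal

/-- A family of sets is discrete if every point has an open neighborhood
meeting at most one member of the family. -/
def DiscreteFam {X I : Type*} [TopologicalSpace X] (U : I → Set X) : Prop :=
  ∀ x : X, ∃ V : Set X, IsOpen V ∧ x ∈ V ∧
    ∀ i j : I, (V ∩ U i).Nonempty → (V ∩ U j).Nonempty → i = j

/-- A set is functionally closed (a zero set) if it is the preimage of `{0}`
under a continuous real-valued function. -/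
def FunClosed {X : Type*} [TopologicalSpace X] (F : Set X) : Prop :=
  ∃ f : X → ℝ, Continuous f ∧ F = f ⁻¹' {0}

/-- A set is functionally open if its complement is functionally closed. -/
def FunOpen {X : Type*} [TopologicalSpace X] (U : Set X) : Prop :=
  FunClosed Uᶜ

/-- The pair (α'th functionally multiplicative class, α'th functionally additive class),
defined by transfinite recursion. -/
noncomputable def FunClassPair (X : Type*) [TopologicalSpace X] (α : Ordinal) :
    Set (Set X) × Set (Set X) :=
  if α = 0 then ({F | FunClosed F}, {U | FunOpen U})
  else
    ({ A | ∃ f : ℕ → Set X, (∀ n, ∃ β, ∃ _ : β < α, f n ∈ (FunClassPair X β).2) ∧ A = ⋂ n, f n },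
     { A | ∃ f : ℕ → Set X, (∀ n, ∃ β, ∃ _ : β < α, f n ∈ (FunClassPair X β).1) ∧ A = ⋃ n, f n })
termination_by α

/-- The α'th functionally multiplicative class. -/
noncomputable def FunMul (X : Type*) [TopologicalSpace X] (α : Ordinal) : Set (Set X) :=
  (FunClassPair X α).1

/-- The α'th functionally additive class. -/
noncomputable def FunAdd (X : Type*) [TopologicalSpace X] (α : Ordinal) : Set (Set X) :=
  (FunClassPair X α).2

/-- Functionally ambiguous sets of class α. -/
noncomputable def FunAmb {X : Type*} [TopologicalSpace X] (α : Ordinal) (A : Set X) : Prop :=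
  A ∈ FunAdd X α ∧ A ∈ FunMul X α

/-- A family is strongly functionally discrete (sfd). -/
def SFDFam {X I : Type*} [TopologicalSpace X] (A : I → Set X) : Prop :=
  ∃ U : I → Set X, DiscreteFam U ∧ (∀ i, FunOpen (U i)) ∧ ∀ i, closure (A i) ⊆ U i

/-- A collection of sets is sfd (viewed as a family indexed by itself). -/
def SFDSet {X : Type*} [TopologicalSpace X] (𝒜 : Set (Set X)) : Prop :=
  SFDFam (fun b : 𝒜 => (b : Set X))

/-- A collection of sets is a well sfd-family. -/
def WellSFDSet {X : Type*} [TopologicalSpace X] (𝒜 : Set (Set X)) : Prop :=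
  ∃ U F : 𝒜 → Set X, DiscreteFam U ∧ DiscreteFam F ∧
    (∀ b, FunOpen (U b)) ∧ (∀ b, FunClosed (F b)) ∧
    ∀ b : 𝒜, (b : Set X) ⊆ F b ∧ F b ⊆ U b

/-- An indexed family is σ-sfd if the index set splits into countably many pieces
on each of which the family is sfd. -/
def SigmaSFDFam {X I : Type*} [TopologicalSpace X] (A : I → Set X) : Prop :=
  ∃ J : ℕ → Set I, (∀ n, SFDFam (fun i : J n => A i)) ∧ (⋃ n, J n) = Set.univ

/-- `B` is a base for the mapping `f`: every preimage of an open set is a union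
of members of `B`. -/
def IsBaseFor {X Y : Type*} [TopologicalSpace X] [TopologicalSpace Y]
    (B : Set (Set X)) (f : X → Y) : Prop :=
  ∀ V : Set Y, IsOpen V → ∃ S ⊆ B, f ⁻¹' V = ⋃₀ S

/-- `f` has a σ-strongly-functionally-discrete base. -/
def SigmaSFD {X Y : Type*} [TopologicalSpace X] [TopologicalSpace Y] (f : X → Y) : Prop :=
  ∃ B : ℕ → Set (Set X), (∀ n, SFDSet (B n)) ∧ IsBaseFor (⋃ n, B n) f

/-- `f` has a σ-sfd base consisting of functionally ambiguous sets of class α. -/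
noncomputable def SigmaSFDAmb {X Y : Type*} [TopologicalSpace X] [TopologicalSpace Y]
    (α : Ordinal) (f : X → Y) : Prop :=
  ∃ B : ℕ → Set (Set X), (∀ n, SFDSet (B n)) ∧ (∀ n, ∀ b ∈ B n, FunAmb α b) ∧
    IsBaseFor (⋃ n, B n) f

/-- `f` belongs to the α'th functionally Lebesgue class. -/
noncomputable def LebClass {X Y : Type*} [TopologicalSpace X] [TopologicalSpace Y]
    (α : Ordinal) (f : X → Y) : Prop :=
  ∀ V : Set Y, IsOpen V → f ⁻¹' V ∈ FunAdd X α

/-- `Y` has a σ-disjoint base. -/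
def SigmaDisjointBase (Y : Type*) [TopologicalSpace Y] : Prop :=
  ∃ V : ℕ → Set (Set Y), (∀ m, (V m).PairwiseDisjoint id) ∧
    TopologicalSpace.IsTopologicalBasis (⋃ m, V m)

section AuxBasic
variable {X : Type*} [TopologicalSpace X]

lemma funClosed_empty : FunClosed (∅ : Set X) :=
  ⟨fun _ => 1, continuous_const, by ext x; simp⟩

lemma funOpen_empty : FunOpen (∅ : Set X) :=
  ⟨fun _ => 0, continuous_const, by ext x; simp⟩

lemma funClosed_union {A B : Set X} (hA : FunClosed A) (hB : FunClosed B) :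
    FunClosed (A ∪ B) := by
  obtain ⟨f, hf, rfl⟩ := hA
  obtain ⟨g, hg, rfl⟩ := hB
  refine ⟨fun x => f x * g x, hf.mul hg, ?_⟩
  ext x; simp [mul_eq_zero]

lemma funClosed_inter {A B : Set X} (hA : FunClosed A) (hB : FunClosed B) :
    FunClosed (A ∩ B) := by
  obtain ⟨f, hf, rfl⟩ := hA
  obtain ⟨g, hg, rfl⟩ := hB
  refine ⟨fun x => |f x| + |g x|, (hf.abs.add hg.abs), ?_⟩
  ext x
  simp only [mem_inter_iff, mem_preimage, mem_singleton_iff]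
  constructor
  · rintro ⟨h1, h2⟩; simp [h1, h2]
  · intro h
    have := (add_eq_zero_iff_of_nonneg (abs_nonneg (f x)) (abs_nonneg (g x))).1 h
    exact ⟨abs_eq_zero.1 this.1, abs_eq_zero.1 this.2⟩

lemma funOpen_inter {A B : Set X} (hA : FunOpen A) (hB : FunOpen B) :
    FunOpen (A ∩ B) := by
  unfold FunOpen at *
  rw [Set.compl_inter]
  exact funClosed_union hA hB

/-- a level set `{|f| ≥ ε}` is a zero set -/
lemma funClosed_abs_ge (f : X → ℝ) (hf : Continuous f) (ε : ℝ) :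
    FunClosed {x | ε ≤ |f x|} := by
  refine ⟨fun x => min |f x| ε - ε, by fun_prop, ?_⟩
  ext x
  simp only [mem_setOf_eq, mem_preimage, mem_singleton_iff, sub_eq_zero, min_eq_right_iff]

lemma funClosed_eq_iInter {Z : Set X} (h : FunClosed Z) :
    ∃ W : ℕ → Set X, (∀ n, FunOpen (W n)) ∧ Z = ⋂ n, W n := by
  obtain ⟨f, hf, rfl⟩ := h
  refine ⟨fun n => {x | |f x| < 1 / (n + 1)}, fun n => ?_, ?_⟩
  · have : {x | |f x| < 1 / ((n : ℝ) + 1)}ᶜ = {x | 1 / ((n : ℝ) + 1) ≤ |f x|} := by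
      ext x; simp [not_lt]
    rw [FunOpen, this]
    exact funClosed_abs_ge f hf _
  · ext x
    simp only [mem_preimage, mem_singleton_iff, mem_iInter, mem_setOf_eq]
    constructor
    · intro h n; rw [h]; simp; positivity
    · intro h
      by_contra hne
      have hpos : 0 < |f x| := abs_pos.2 hne
      obtain ⟨n, hn⟩ := exists_nat_one_div_lt hpos
      exact absurd (h n) (not_lt.2 hn.le)

lemma funOpen_eq_iUnion {U : Set X} (h : FunOpen U) :
    ∃ Z : ℕ → Set X, (∀ n, FunClosed (Z n)) ∧ U = ⋃ n, Z n := by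
  obtain ⟨g, hg, hU⟩ := h
  have hU' : U = {x | g x ≠ 0} := by
    have := congrArg compl hU
    rw [compl_compl] at this
    rw [this]; ext x; simp
  refine ⟨fun n => {x | 1 / ((n : ℝ) + 1) ≤ |g x|}, fun n => funClosed_abs_ge g hg _, ?_⟩
  rw [hU']
  ext x
  simp only [mem_setOf_eq, mem_iUnion]
  constructor
  · intro h
    obtain ⟨n, hn⟩ := exists_nat_one_div_lt (abs_pos.2 h)
    exact ⟨n, hn.le⟩
  · rintro ⟨n, hn⟩
    intro h0
    rw [h0] at hn
    simp at hn
    have : (0:ℝ) < 1 / ((n:ℝ)+1) := by positivity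
    linarith

end AuxBasic
section AuxClass
variable {X : Type*} [TopologicalSpace X]

lemma funMul_zero_iff {A : Set X} : A ∈ FunMul X 0 ↔ FunClosed A := by
  rw [FunMul, FunClassPair]; simp

lemma funAdd_zero_iff {A : Set X} : A ∈ FunAdd X 0 ↔ FunOpen A := by
  rw [FunAdd, FunClassPair]; simp

lemma funMul_iff {α : Ordinal} (hα : α ≠ 0) {A : Set X} :
    A ∈ FunMul X α ↔
      ∃ f : ℕ → Set X, (∀ n, ∃ β, β < α ∧ f n ∈ FunAdd X β) ∧ A = ⋂ n, f n := by
  rw [FunMul, FunClassPair]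
  simp only [if_neg hα]
  simp only [mem_setOf_eq, exists_prop]
  rfl

lemma funAdd_iff {α : Ordinal} (hα : α ≠ 0) {A : Set X} :
    A ∈ FunAdd X α ↔
      ∃ f : ℕ → Set X, (∀ n, ∃ β, β < α ∧ f n ∈ FunMul X β) ∧ A = ⋃ n, f n := by
  rw [FunAdd, FunClassPair]
  simp only [if_neg hα]
  simp only [mem_setOf_eq, exists_prop]
  rfl

end AuxClass
section AuxMono
variable {X : Type*} [TopologicalSpace X]

lemma funMul_mono {β α : Ordinal} (h : β ≤ α) : FunMul X β ⊆ FunMul X α := by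
  rcases eq_or_lt_of_le h with rfl | hlt
  · exact subset_rfl
  · have hα : α ≠ 0 := fun h0 => by simp [h0] at hlt
    intro A hA
    rcases eq_or_ne β 0 with rfl | hβ
    · obtain ⟨W, hW, hZW⟩ := funClosed_eq_iInter (funMul_zero_iff.1 hA)
      exact (funMul_iff hα).2 ⟨W, fun n => ⟨0, hlt, funAdd_zero_iff.2 (hW n)⟩, hZW⟩
    · obtain ⟨f, hf, rfl⟩ := (funMul_iff hβ).1 hA
      exact (funMul_iff hα).2 ⟨f, fun n => by
        obtain ⟨γ, hγ, hmem⟩ := hf n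
        exact ⟨γ, hγ.trans hlt, hmem⟩, rfl⟩

lemma funAdd_mono {β α : Ordinal} (h : β ≤ α) : FunAdd X β ⊆ FunAdd X α := by
  rcases eq_or_lt_of_le h with rfl | hlt
  · exact subset_rfl
  · have hα : α ≠ 0 := fun h0 => by simp [h0] at hlt
    intro A hA
    rcases eq_or_ne β 0 with rfl | hβ
    · obtain ⟨Z, hZ, hUZ⟩ := funOpen_eq_iUnion (funAdd_zero_iff.1 hA)
      exact (funAdd_iff hα).2 ⟨Z, fun n => ⟨0, hlt, funMul_zero_iff.2 (hZ n)⟩, hUZ⟩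
    · obtain ⟨f, hf, rfl⟩ := (funAdd_iff hβ).1 hA
      exact (funAdd_iff hα).2 ⟨f, fun n => by
        obtain ⟨γ, hγ, hmem⟩ := hf n
        exact ⟨γ, hγ.trans hlt, hmem⟩, rfl⟩

lemma funMul_empty (α : Ordinal) : (∅ : Set X) ∈ FunMul X α :=
  funMul_mono (zero_le (a := α)) (funMul_zero_iff.2 funClosed_empty)

lemma funAdd_funOpen {α : Ordinal} {U : Set X} (h : FunOpen U) : U ∈ FunAdd X α :=
  funAdd_mono (zero_le (a := α)) (funAdd_zero_iff.2 h)

/-- intersection of a multiplicative-class set with a functionally closed set -/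
lemma funMul_inter_funClosed {γ : Ordinal} {C Z : Set X} (hC : C ∈ FunMul X γ)
    (hZ : FunClosed Z) : C ∩ Z ∈ FunMul X γ := by
  rcases eq_or_ne γ 0 with rfl | hγ
  · exact funMul_zero_iff.2 (funClosed_inter (funMul_zero_iff.1 hC) hZ)
  · obtain ⟨f, hf, rfl⟩ := (funMul_iff hγ).1 hC
    obtain ⟨W, hW, rfl⟩ := funClosed_eq_iInter hZ
    refine (funMul_iff hγ).2 ⟨fun n => if Even n then f (n / 2) else W (n / 2), fun n => ?_, ?_⟩
    · by_cases he : Even n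
      · simp only [if_pos he]; exact hf (n / 2)
      · simp only [if_neg he]
        exact ⟨0, pos_iff_ne_zero.2 hγ, funAdd_zero_iff.2 (hW (n / 2))⟩
    · ext x
      simp only [mem_inter_iff, mem_iInter]
      constructor
      · rintro ⟨h1, h2⟩ n
        by_cases he : Even n <;> simp [he, h1 _, h2 _]
      · intro h
        constructor
        · intro n
          have h2 : (2 * n) / 2 = n := by omega
          have := h (2 * n)
          simpa [Nat.even_iff, h2] using this
        · intro n
          have h2 : (2 * n + 1) / 2 = n := by omega
          have := h (2 * n + 1)
          simpa [Nat.even_iff, Nat.mul_add_mod, h2] using this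

/-- intersection of an additive-class set with a functionally open set -/
lemma funAdd_inter_funOpen {β : Ordinal} {A U : Set X} (hA : A ∈ FunAdd X β)
    (hU : FunOpen U) : A ∩ U ∈ FunAdd X β := by
  rcases eq_or_ne β 0 with rfl | hβ
  · exact funAdd_zero_iff.2 (funOpen_inter (funAdd_zero_iff.1 hA) hU)
  · obtain ⟨f, hf, rfl⟩ := (funAdd_iff hβ).1 hA
    obtain ⟨Z, hZ, rfl⟩ := funOpen_eq_iUnion hU
    have key : (⋃ n, f n) ∩ (⋃ m, Z m) = ⋃ p : ℕ × ℕ, f p.1 ∩ Z p.2 := by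
      ext x
      simp only [mem_inter_iff, mem_iUnion, Prod.exists]
      constructor
      · rintro ⟨⟨n, hn⟩, ⟨m, hm⟩⟩; exact ⟨n, m, hn, hm⟩
      · rintro ⟨n, m, hn, hm⟩; exact ⟨⟨n, hn⟩, ⟨m, hm⟩⟩
    rw [key]
    set q : ℕ ≃ ℕ × ℕ := (Denumerable.eqv (ℕ × ℕ)).symm with hq
    refine (funAdd_iff hβ).2 ⟨fun k => f (q k).1 ∩ Z (q k).2, fun k => ?_, ?_⟩
    · obtain ⟨γ, hγ, hmem⟩ := hf (q k).1
      exact ⟨γ, hγ, funMul_inter_funClosed hmem (hZ (q k).2)⟩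
    · ext x
      simp only [mem_iUnion, Prod.exists]
      constructor
      · rintro ⟨n, m, hnm⟩
        exact ⟨q.symm (n, m), by simpa using hnm⟩
      · rintro ⟨k, hk⟩
        exact ⟨(q k).1, (q k).2, hk⟩

end AuxMono
section AuxSum
variable {X I : Type*} [TopologicalSpace X]

lemma DiscreteFam.mem_unique {U : I → Set X} (hd : DiscreteFam U) {x : X} {i j : I}
    (hi : x ∈ U i) (hj : x ∈ U j) : i = j := by
  obtain ⟨V, _, hxV, hV⟩ := hd x
  exact hV i j ⟨x, hxV, hi⟩ ⟨x, hxV, hj⟩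

lemma discrete_tsum_spec {U : I → Set X} (hd : DiscreteFam U) (ψ : I → X → ℝ)
    (hc : ∀ i, Continuous (ψ i)) (hsupp : ∀ i x, x ∉ U i → ψ i x = 0) :
    Continuous (fun x => ∑' i, ψ i x) ∧
    (∀ i x, x ∈ U i → (∑' j, ψ j x) = ψ i x) ∧
    (∀ x, (∀ i, x ∉ U i) → (∑' j, ψ j x) = 0) := by
  have hval : ∀ i x, x ∈ U i → (∑' j, ψ j x) = ψ i x := by
    intro i x hx
    refine tsum_eq_single i fun j hj => ?_
    refine hsupp j x fun hxj => hj (hd.mem_unique hxj hx)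
  have hzero : ∀ x, (∀ i, x ∉ U i) → (∑' j, ψ j x) = 0 := by
    intro x hx
    have : (fun j => ψ j x) = fun _ => 0 := funext fun j => hsupp j x (hx j)
    rw [this, tsum_zero]
  refine ⟨?_, hval, hzero⟩
  rw [continuous_iff_continuousAt]
  intro x
  obtain ⟨V, hVo, hxV, hV⟩ := hd x
  by_cases hne : ∃ i, (V ∩ U i).Nonempty
  · obtain ⟨i0, hi0⟩ := hne
    have heq : ∀ y ∈ V, (∑' j, ψ j y) = ψ i0 y := by
      intro y hy
      refine tsum_eq_single i0 fun j hj => ?_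
      refine hsupp j y fun hyj => hj (hV j i0 ⟨y, hy, hyj⟩ hi0)
    have hev : (fun x => ∑' i, ψ i x) =ᶠ[nhds x] ψ i0 :=
      Filter.eventuallyEq_of_mem (hVo.mem_nhds hxV) heq
    exact ((hc i0).continuousAt).congr hev.symm
  · push_neg at hne
    have heq : ∀ y ∈ V, (∑' j, ψ j y) = 0 := by
      intro y hy
      have : (fun j => ψ j y) = fun _ => 0 := funext fun j =>
        hsupp j y fun hyj => (Set.eq_empty_iff_forall_notMem.1 (hne j) y ⟨hy, hyj⟩).elim
      rw [this, tsum_zero]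
    have hev : (fun x => ∑' i, ψ i x) =ᶠ[nhds x] fun _ => (0:ℝ) :=
      Filter.eventuallyEq_of_mem (hVo.mem_nhds hxV) heq
    exact (continuousAt_const).congr hev.symm

/-- sfd-type union of functionally closed sets is functionally closed -/
lemma sfd_iUnion_funClosed {B U : I → Set X} (hd : DiscreteFam U)
    (hUo : ∀ i, FunOpen (U i)) (hsub : ∀ i, B i ⊆ U i) (hB : ∀ i, FunClosed (B i)) :
    FunClosed (⋃ i, B i) := by
  have hf : ∀ i, ∃ f : X → ℝ, Continuous f ∧ (∀ x, 0 ≤ f x) ∧ B i = f ⁻¹' {0} := by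
    intro i
    obtain ⟨f, hf, hBf⟩ := hB i
    exact ⟨fun x => |f x|, hf.abs, fun x => abs_nonneg _, by rw [hBf]; ext x; simp⟩
  have hg : ∀ i, ∃ g : X → ℝ, Continuous g ∧ (∀ x, 0 ≤ g x) ∧ U i = {x | g x ≠ 0} := by
    intro i
    obtain ⟨g, hg, hUg⟩ := hUo i
    refine ⟨fun x => |g x|, hg.abs, fun x => abs_nonneg _, ?_⟩
    have := congrArg compl hUg
    rw [compl_compl] at this
    rw [this]; ext x; simp
  choose f hfc hf0 hBf using hf
  choose g hgc hg0 hUg using hg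
  have hxB : ∀ i x, x ∈ B i ↔ f i x = 0 := fun i x => by rw [hBf i]; simp
  have hxU : ∀ i x, x ∈ U i ↔ g i x ≠ 0 := fun i x => by rw [hUg i]; simp
  have hden : ∀ i x, 0 < f i x + g i x := by
    intro i x
    rcases (hf0 i x).lt_or_eq with h | h
    · linarith [hg0 i x]
    · have hx : x ∈ B i := (hxB i x).2 h.symm
      have : g i x ≠ 0 := (hxU i x).1 (hsub i hx)
      have : 0 < g i x := lt_of_le_of_ne (hg0 i x) (Ne.symm this)
      linarith
  set ψ : I → X → ℝ := fun i x => g i x / (f i x + g i x) with hψ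
  have hψc : ∀ i, Continuous (ψ i) :=
    fun i => (hgc i).div ((hfc i).add (hgc i)) (fun x => (hden i x).ne')
  have hψsupp : ∀ i x, x ∉ U i → ψ i x = 0 := by
    intro i x hx
    have : g i x = 0 := by_contra fun h => hx ((hxU i x).2 h)
    simp [hψ, this]
  obtain ⟨hsc, hval, hzero⟩ := discrete_tsum_spec hd ψ hψc hψsupp
  refine ⟨fun x => (∑' i, ψ i x) - 1, hsc.sub continuous_const, ?_⟩
  ext x
  simp only [mem_iUnion, mem_preimage, mem_singleton_iff, sub_eq_zero]
  constructor
  · rintro ⟨i, hi⟩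
    rw [hval i x (hsub i hi)]
    have hfx : f i x = 0 := (hxB i x).1 hi
    simp [hψ, hfx]
    exact ((hxU i x).1 (hsub i hi))
  · intro hs
    by_cases hx : ∃ i, x ∈ U i
    · obtain ⟨i, hi⟩ := hx
      rw [hval i x hi] at hs
      refine ⟨i, (hxB i x).2 ?_⟩
      have hgx : g i x ≠ 0 := (hxU i x).1 hi
      have hs' : g i x / (f i x + g i x) = 1 := hs
      have hs := (div_eq_one_iff_eq (hden i x).ne').1 hs'
      linarith
    · push_neg at hx
      rw [hzero x hx] at hs
      norm_num at hs

/-- sfd-type union of functionally open sets is functionally open -/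
lemma sfd_iUnion_funOpen {B U : I → Set X} (hd : DiscreteFam U)
    (hUo : ∀ i, FunOpen (U i)) (hsub : ∀ i, B i ⊆ U i) (hB : ∀ i, FunOpen (B i)) :
    FunOpen (⋃ i, B i) := by
  have hf : ∀ i, ∃ f : X → ℝ, Continuous f ∧ (∀ x, 0 ≤ f x) ∧ B i = {x | f x ≠ 0} := by
    intro i
    obtain ⟨f, hf, hBf⟩ := hB i
    refine ⟨fun x => |f x|, hf.abs, fun x => abs_nonneg _, ?_⟩
    have := congrArg compl hBf
    rw [compl_compl] at this
    rw [this]; ext x; simp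
  have hg : ∀ i, ∃ g : X → ℝ, Continuous g ∧ (∀ x, 0 ≤ g x) ∧ U i = {x | g x ≠ 0} := by
    intro i
    obtain ⟨g, hg, hUg⟩ := hUo i
    refine ⟨fun x => |g x|, hg.abs, fun x => abs_nonneg _, ?_⟩
    have := congrArg compl hUg
    rw [compl_compl] at this
    rw [this]; ext x; simp
  choose f hfc hf0 hBf using hf
  choose g hgc hg0 hUg using hg
  have hxB : ∀ i x, x ∈ B i ↔ f i x ≠ 0 := fun i x => by rw [hBf i]; simp
  have hxU : ∀ i x, x ∈ U i ↔ g i x ≠ 0 := fun i x => by rw [hUg i]; simp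
  set θ : I → X → ℝ := fun i x => min (f i x) (g i x) with hθ
  have hθc : ∀ i, Continuous (θ i) := fun i => (hfc i).min (hgc i)
  have hθsupp : ∀ i x, x ∉ U i → θ i x = 0 := by
    intro i x hx
    have hgx : g i x = 0 := by_contra fun h => hx ((hxU i x).2 h)
    simp only [hθ, hgx]
    exact min_eq_right (hf0 i x)
  obtain ⟨hsc, hval, hzero⟩ := discrete_tsum_spec hd θ hθc hθsupp
  refine ⟨fun x => ∑' i, θ i x, hsc, ?_⟩
  ext x
  simp only [mem_compl_iff, mem_iUnion, mem_preimage, mem_singleton_iff, not_exists]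
  constructor
  · intro hx
    by_cases hu : ∃ i, x ∈ U i
    · obtain ⟨i, hi⟩ := hu
      rw [hval i x hi]
      have hfx : f i x = 0 := by_contra fun h => (hx i) ((hxB i x).2 h)
      simp only [hθ, hfx]
      exact min_eq_left (hg0 i x)
    · push_neg at hu
      exact hzero x hu
  · intro hs i hi
    have hxUi := hsub i hi
    rw [hval i x hxUi] at hs
    have hfx : f i x ≠ 0 := (hxB i x).1 hi
    have hgx : g i x ≠ 0 := (hxU i x).1 hxUi
    have : 0 < min (f i x) (g i x) :=
      lt_min (lt_of_le_of_ne (hf0 i x) (Ne.symm hfx)) (lt_of_le_of_ne (hg0 i x) (Ne.symm hgx))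
    rw [hθ] at hs
    simp at hs
    linarith
end AuxSum
section AuxEnum
open Cardinal

lemma exists_enum_lt {α : Ordinal} (hα : α < ω₁) (h0 : α ≠ 0) :
    ∃ e : ℕ → Ordinal, (∀ k, e k < α) ∧ ∀ β < α, ∃ k, e k = β := by
  have hcard : α.card < ℵ₁ := by
    rw [← Cardinal.lt_ord, Cardinal.ord_aleph]
    exact hα
  have hc : (Set.Iio α).Countable := by
    rw [Cardinal.countable_iff_lt_aleph_one, Ordinal.mk_Iio_ordinal]
    exact Cardinal.lift_lt_aleph_one.2 hcard
  have hne : (Set.Iio α).Nonempty := ⟨0, pos_iff_ne_zero.2 h0⟩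
  obtain ⟨e, he⟩ := hc.exists_eq_range hne
  refine ⟨e, fun k => ?_, fun β hβ => ?_⟩
  · have : e k ∈ Set.Iio α := he ▸ Set.mem_range_self k
    exact this
  · have : β ∈ Set.range e := he ▸ hβ
    obtain ⟨k, hk⟩ := this
    exact ⟨k, hk⟩

end AuxEnum
section MainLemma

lemma sfd_union_main {X I : Type*} [TopologicalSpace X]
    (U : I → Set X) (hd : DiscreteFam U) (hUo : ∀ i, FunOpen (U i)) (α : Ordinal) :
    α < ω₁ → ∀ B : I → Set X, (∀ i, B i ⊆ U i) →
    ((∀ i, B i ∈ FunAdd X α) → (⋃ i, B i) ∈ FunAdd X α) ∧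
    ((∀ i, B i ∈ FunMul X α) → (⋃ i, B i) ∈ FunMul X α) := by
  induction α using Ordinal.induction with
  | h α IH =>
  intro hα B hsub
  rcases eq_or_ne α 0 with rfl | h0
  · constructor
    · intro hB
      exact funAdd_zero_iff.2 (sfd_iUnion_funOpen hd hUo hsub fun i => funAdd_zero_iff.1 (hB i))
    · intro hB
      exact funMul_zero_iff.2 (sfd_iUnion_funClosed hd hUo hsub fun i => funMul_zero_iff.1 (hB i))
  · obtain ⟨e, he1, he2⟩ := exists_enum_lt hα h0
    have heω : ∀ k, e k < ω₁ := fun k => (he1 k).trans hα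
    set q : ℕ ≃ ℕ × ℕ := (Denumerable.eqv (ℕ × ℕ)).symm with hq
    constructor
    · -- additive case
      intro hB
      have h1 := fun i => (funAdd_iff h0).1 (hB i)
      choose A hA hBA using h1
      choose β hβlt hβmem using hA
      set G : ℕ × ℕ → I → Set X := fun p i => if β i p.1 ≤ e p.2 then A i p.1 else ∅ with hG
      have hGsub : ∀ p i, G p i ⊆ U i := by
        intro p i
        by_cases h : β i p.1 ≤ e p.2
        · simp only [hG, if_pos h]
          refine subset_trans ?_ (hsub i)
          rw [hBA i]
          exact subset_iUnion _ p.1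
        · simp only [hG, if_neg h]
          exact empty_subset _
      have hGmem : ∀ p i, G p i ∈ FunMul X (e p.2) := by
        intro p i
        by_cases h : β i p.1 ≤ e p.2
        · simp only [hG, if_pos h]
          exact funMul_mono h (hβmem i p.1)
        · simp only [hG, if_neg h]
          exact funMul_empty _
      have hGU : ∀ p : ℕ × ℕ, (⋃ i, G p i) ∈ FunMul X (e p.2) := fun p =>
        (IH (e p.2) (he1 p.2) (heω p.2) (G p) (hGsub p)).2 (hGmem p)
      have hkey : (⋃ i, B i) = ⋃ k, ⋃ i, G (q k) i := by
        ext x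
        simp only [mem_iUnion]
        constructor
        · rintro ⟨i, hi⟩
          rw [hBA i] at hi
          obtain ⟨n, hn⟩ := mem_iUnion.1 hi
          obtain ⟨k, hk⟩ := he2 (β i n) (hβlt i n)
          refine ⟨q.symm (n, k), i, ?_⟩
          simp only [hG, Equiv.apply_symm_apply]
          rw [if_pos hk.ge]
          exact hn
        · rintro ⟨k, i, hk⟩
          refine ⟨i, ?_⟩
          by_cases h : β i (q k).1 ≤ e (q k).2
          · simp only [hG, if_pos h] at hk
            rw [hBA i]
            exact mem_iUnion.2 ⟨(q k).1, hk⟩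
          · simp only [hG, if_neg h] at hk
            exact absurd hk (notMem_empty x)
      rw [hkey]
      exact (funAdd_iff h0).2 ⟨fun k => ⋃ i, G (q k) i,
        fun k => ⟨e (q k).2, he1 _, hGU (q k)⟩, rfl⟩
    · -- multiplicative case
      intro hB
      have h1 := fun i => (funMul_iff h0).1 (hB i)
      choose A hA hBA using h1
      choose β hβlt hβmem using hA
      set C : I → ℕ → Set X := fun i n => A i n ∩ U i with hC
      have hCmem : ∀ i n, C i n ∈ FunAdd X (β i n) := fun i n =>
        funAdd_inter_funOpen (hβmem i n) (hUo i)
      set G : ℕ × ℕ → I → Set X := fun p i => if β i p.1 ≤ e p.2 then C i p.1 else U i with hG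
      have hGsub : ∀ p i, G p i ⊆ U i := by
        intro p i
        by_cases h : β i p.1 ≤ e p.2
        · simp only [hG, if_pos h, hC]
          exact inter_subset_right
        · simp only [hG, if_neg h]
          exact subset_rfl
      have hGmem : ∀ p i, G p i ∈ FunAdd X (e p.2) := by
        intro p i
        by_cases h : β i p.1 ≤ e p.2
        · simp only [hG, if_pos h]
          exact funAdd_mono h (hCmem i p.1)
        · simp only [hG, if_neg h]
          exact funAdd_funOpen (hUo i)
      have hGU : ∀ p : ℕ × ℕ, (⋃ i, G p i) ∈ FunAdd X (e p.2) := fun p =>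
        (IH (e p.2) (he1 p.2) (heω p.2) (G p) (hGsub p)).1 (hGmem p)
      have hkey : (⋃ i, B i) = ⋂ k, ⋃ i, G (q k) i := by
        ext x
        simp only [mem_iUnion, mem_iInter]
        constructor
        · rintro ⟨i, hi⟩ k
          refine ⟨i, ?_⟩
          have hxU : x ∈ U i := hsub i hi
          have hxA : ∀ n, x ∈ A i n := by
            intro n
            have h2 := hi
            rw [hBA i] at h2
            exact mem_iInter.1 h2 n
          by_cases h : β i (q k).1 ≤ e (q k).2
          · simp only [hG, if_pos h, hC]
            exact ⟨hxA _, hxU⟩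
          · simp only [hG, if_neg h]
            exact hxU
        · intro h
          obtain ⟨i0, hi0⟩ := h (q.symm (0, 0))
          have hxU0 : x ∈ U i0 := hGsub _ _ hi0
          refine ⟨i0, ?_⟩
          rw [hBA i0]
          refine mem_iInter.2 fun n => ?_
          obtain ⟨k0, hk0⟩ := he2 (β i0 n) (hβlt i0 n)
          obtain ⟨j, hj⟩ := h (q.symm (n, k0))
          have hxUj : x ∈ U j := hGsub _ _ hj
          have hji : j = i0 := hd.mem_unique hxUj hxU0
          subst hji
          simp only [hG, Equiv.apply_symm_apply] at hj
          rw [if_pos hk0.ge] at hj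
          exact hj.1
      rw [hkey]
      exact (funMul_iff h0).2 ⟨fun k => ⋃ i, G (q k) i,
        fun k => ⟨e (q k).2, he1 _, hGU (q k)⟩, rfl⟩

end MainLemma


theorem stmt3 {X I : Type*} [TopologicalSpace X] (α : Ordinal) (hα : α < ω₁)
    (B : I → Set X) (hsfd : SFDFam B) :
    ((∀ i, B i ∈ FunAdd X α) → (⋃ i, B i) ∈ FunAdd X α) ∧
    ((∀ i, B i ∈ FunMul X α) → (⋃ i, B i) ∈ FunMul X α) := by
  obtain ⟨U, hd, hUo, hcl⟩ := hsfd
  exact sfd_union_main U hd hUo α hα B fun i => (subset_closure).trans (hcl i)
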